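/- Let Q, K, L be ℚ-linear endomorphisms of a ℚ-vector space M satisfying the QK-algebra relations Q∘Q = 0, Q∘K + K∘Q = L, and K∘L + L∘K = 0. Let n ∈ ℕ and let W^0, W^1, …, W^n ∈ M satisfy Q(W^q) = 0 for all 0 ≤ q ≤ n. Define the general K-sequence O^p := Σ_{q=0}^{p} (1/(p−q)!)·K^(p−q)(W^q) for 0 ≤ p ≤ n. Then Q(O^0) = 0 and Q(O^p) = L(O^(p−1)) for all 1 ≤ p ≤ n; that is, every general K-sequence is a descendant sequence. -/

import Mathlib

private lemma LKpow_aux {M : Type*} [AddCommGroup M] [Module ℚ M]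
    (K L : M →ₗ[ℚ] M) (hKL : K ∘ₗ L + L ∘ₗ K = 0) :
    ∀ (m : ℕ) (x : M), L ((K ^ m) x) = ((-1 : ℚ) ^ m) • (K ^ m) (L x) := by
  have hLK : ∀ y : M, L (K y) = - K (L y) := by
    intro y
    have := congrArg (fun f : M →ₗ[ℚ] M => f y) hKL
    simp only [LinearMap.add_apply, LinearMap.comp_apply, LinearMap.zero_apply] at this
    exact eq_neg_of_add_eq_zero_right this
  intro m
  induction m with
  | zero => intro x; simp
  | succ m ih =>
    intro x
    rw [pow_succ', Module.End.mul_apply, hLK, ih, pow_succ']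
    simp [smul_smul]

private lemma QKpow_aux {M : Type*} [AddCommGroup M] [Module ℚ M]
    (Q K L : M →ₗ[ℚ] M) (hQK : Q ∘ₗ K + K ∘ₗ Q = L) (hKL : K ∘ₗ L + L ∘ₗ K = 0) :
    ∀ (m : ℕ) (x : M), Q x = 0 →
      Q ((K ^ (m + 1)) x) = (((m + 1 : ℕ) : ℚ) * (-1 : ℚ) ^ m) • (K ^ m) (L x) := by
  have hQKe : ∀ y : M, Q (K y) = L y - K (Q y) := by
    intro y
    have := congrArg (fun f : M →ₗ[ℚ] M => f y) hQK
    simp only [LinearMap.add_apply, LinearMap.comp_apply] at this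
    exact eq_sub_of_add_eq this
  intro m
  induction m with
  | zero => intro x hx; simp [hQKe, hx]
  | succ m ih =>
    intro x hx
    rw [pow_succ', Module.End.mul_apply, hQKe, ih x hx,
      LKpow_aux K L hKL, map_smul]
    have hK : K ((K ^ m) (L x)) = (K ^ (m + 1)) (L x) := by
      rw [pow_succ', Module.End.mul_apply]
    rw [hK, ← sub_smul]
    congr 1
    push_cast
    ring

theorem general_K_sequence_is_descendant {M : Type*} [AddCommGroup M] [Module ℚ M]
    (Q K L : M →ₗ[ℚ] M)
    (hQQ : Q ∘ₗ Q = 0) (hQK : Q ∘ₗ K + K ∘ₗ Q = L) (hKL : K ∘ₗ L + L ∘ₗ K = 0)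
    (n : ℕ) (W : ℕ → M) (hW : ∀ q : ℕ, q ≤ n → Q (W q) = 0)
    (O : ℕ → M)
    (hO : ∀ p : ℕ, p ≤ n →
      O p = ∑ q ∈ Finset.range (p + 1), (((p - q).factorial : ℚ)⁻¹) • (K ^ (p - q)) (W q)) :
    Q (O 0) = 0 ∧ ∀ p : ℕ, 1 ≤ p → p ≤ n → Q (O p) = L (O (p - 1)) := by
  constructor
  · rw [hO 0 (Nat.zero_le n)]
    simp [hW 0 (Nat.zero_le n)]
  · intro p hp1 hpn
    rw [hO p hpn, hO (p - 1) (le_trans (Nat.sub_le p 1) hpn), map_sum, map_sum]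
    rw [Finset.sum_range_succ]
    have hlast : Q ((((p - p).factorial : ℚ)⁻¹) • (K ^ (p - p)) (W p)) = 0 := by
      simp [hW p hpn]
    rw [hlast, add_zero]
    have hpe : p - 1 + 1 = p := Nat.succ_pred_eq_of_pos hp1
    rw [hpe]
    apply Finset.sum_congr rfl
    intro q hq
    have hqlt : q < p := Finset.mem_range.mp hq
    have hsub : p - q = (p - 1 - q) + 1 := by omega
    rw [map_smul, hsub, QKpow_aux Q K L hQK hKL _ _ (hW q (le_trans (le_of_lt hqlt) hpn)),
      map_smul, LKpow_aux K L hKL, smul_smul, smul_smul]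
    congr 1
    rw [← hsub]
    have hfac : ((p - q).factorial : ℚ) = ((p - 1 - q) + 1 : ℕ) * ((p - 1 - q).factorial : ℚ) := by
      rw [hsub]
      push_cast [Nat.factorial_succ]
      ring
    rw [hfac]
    have h1 : (((p - 1 - q) + 1 : ℕ) : ℚ) ≠ 0 := by positivity
    have h2 : ((p - 1 - q).factorial : ℚ) ≠ 0 := Nat.cast_ne_zero.mpr (Nat.factorial_ne_zero _)
    field_simp
    rw [hsub]
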